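/- For every i ≥ 2, the 3×3 determinant det(x_{i−1}, x_i, x_{i+1}) equals (a − b) or −(a − b); in particular, since a ≠ b, it is nonzero. -/

import Mathlib

set_option linter.unusedSectionVars false
set_option linter.unnecessarySeqFocus false
set_option maxHeartbeats 1000000

/-- The Fibonacci words on the alphabet `{a, b}`:
`w₁ = a`, `w₂ = ab`, `w_i = w_{i-1} w_{i-2}` for `i ≥ 3` (and `w₀ = ε`). -/
def fibWord {α : Type*} (a b : α) : ℕ → List α
  | 0 => []
  | 1 => [a]
  | 2 => [a, b]
  | n + 3 => fibWord a b (n + 2) ++ fibWord a b (n + 1)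

/-- `fibMat a b i` is the symmetric matrix `M_i = Φ(m_i)`, the image under the monoid
morphism `Φ` (sending the letter `a` to `((a,1),(1,0))` and `b` to `((b,1),(1,0))`)
of the palindrome `m_i`, i.e. of the word `w_{i+2}` deprived of its last two letters. -/
def fibMat {A : Type*} [CommRing A] (a b : A) (i : ℕ) : Matrix (Fin 2) (Fin 2) A :=
  (((fibWord a b (i + 2)).dropLast.dropLast).map (fun c => !![c, 1; 1, 0])).prod

/-- The triple `x_i = (x_{i,0}, x_{i,1}, x_{i,2}) ∈ A³` of entries of the symmetric
matrix `M_i = ((x_{i,0}, x_{i,1}), (x_{i,1}, x_{i,2}))`. -/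
def fibTriple {A : Type*} [CommRing A] (a b : A) (i : ℕ) : Fin 3 → A :=
  ![fibMat a b i 0 0, fibMat a b i 0 1, fibMat a b i 1 1]

section FibAux
variable {A : Type*} [CommRing A] (a b : A)

/-- The morphism `Φ` on words. -/
def fibPhiL (l : List A) : Matrix (Fin 2) (Fin 2) A := (l.map (fun c => !![c, 1; 1, 0])).prod

lemma fibPhiL_append (u v : List A) : fibPhiL (u ++ v) = fibPhiL u * fibPhiL v := by
  simp [fibPhiL]

lemma fibWord_add_three (n : ℕ) :
    fibWord a b (n+3) = fibWord a b (n+2) ++ fibWord a b (n+1) := rfl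

/-- Near-commutation of consecutive Fibonacci words: the two products differ only
in the order of the final two letters. -/
lemma fibWord_swap (n : ℕ) : ∃ (u : List A) (x y : A),
    fibWord a b (n+2) ++ fibWord a b (n+1) = u ++ [x, y] ∧
    fibWord a b (n+1) ++ fibWord a b (n+2) = u ++ [y, x] := by
  induction n with
  | zero => exact ⟨[a], b, a, rfl, rfl⟩
  | succ n ih =>
    obtain ⟨u, x, y, h1, h2⟩ := ih
    refine ⟨fibWord a b (n+2) ++ u, y, x, ?_, ?_⟩
    · show fibWord a b (n+3) ++ fibWord a b (n+2) = _
      rw [fibWord_add_three, List.append_assoc, h2, List.append_assoc]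
    · show fibWord a b (n+2) ++ fibWord a b (n+3) = _
      rw [fibWord_add_three, h1, ← List.append_assoc]

lemma fib_two_le_len (n : ℕ) : 2 ≤ (fibWord a b (n+2)).length := by
  induction n with
  | zero => simp [fibWord]
  | succ n ih =>
    show 2 ≤ (fibWord a b (n+3)).length
    rw [fibWord_add_three, List.length_append]
    omega

/-- The palindromic prefixes satisfy `m_{n+1} = w_{n+1} m_n`. -/
lemma fib_mword_succ (n : ℕ) :
    (fibWord a b (n+3)).dropLast.dropLast
      = fibWord a b (n+1) ++ (fibWord a b (n+2)).dropLast.dropLast := by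
  obtain ⟨u, x, y, h1, h2⟩ := fibWord_swap a b n
  have hlen := fib_two_le_len a b n
  have hne : fibWord a b (n+2) ≠ [] := by
    intro h; rw [h] at hlen; simp at hlen
  have hne2 : (fibWord a b (n+2)).dropLast ≠ [] := by
    intro h
    have := congrArg List.length h
    rw [List.length_dropLast] at this
    simp at this; omega
  calc (fibWord a b (n+3)).dropLast.dropLast
      = (u ++ [x, y]).dropLast.dropLast := by rw [fibWord_add_three, h1]
    _ = u := by simp
    _ = (u ++ [y, x]).dropLast.dropLast := by simp
    _ = (fibWord a b (n+1) ++ fibWord a b (n+2)).dropLast.dropLast := by rw [h2]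
    _ = fibWord a b (n+1) ++ (fibWord a b (n+2)).dropLast.dropLast := by
        rw [List.dropLast_append_of_ne_nil hne, List.dropLast_append_of_ne_nil hne2]

lemma fibMat_succ (n : ℕ) :
    fibMat a b (n+1) = fibPhiL (fibWord a b (n+1)) * fibMat a b n := by
  show ((fibWord a b (n+3)).dropLast.dropLast.map _).prod = _
  rw [fib_mword_succ, List.map_append, List.prod_append]
  rfl

/-- Cayley–Hamilton for `2 × 2` matrices, in explicit form. -/
lemma fib_sq_fin_two (Z : Matrix (Fin 2) (Fin 2) A) :
    Z * Z = (Z 0 0 + Z 1 1) • Z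
      - (Z 0 0 * Z 1 1 - Z 0 1 * Z 1 0) • (1 : Matrix (Fin 2) (Fin 2) A) := by
  ext i j
  fin_cases i <;> fin_cases j <;>
    simp [Matrix.mul_apply, Fin.sum_univ_two, Matrix.one_apply, Matrix.sub_apply] <;> ring

lemma fib_det_phiL (l : List A) : (fibPhiL l).det = (-1 : A) ^ l.length := by
  induction l with
  | nil => simp [fibPhiL]
  | cons c l ih =>
    have : fibPhiL (c :: l) = !![c, 1; 1, 0] * fibPhiL l := by simp [fibPhiL]
    rw [this, Matrix.det_mul, ih, Matrix.det_fin_two_of]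
    rw [List.length_cons, pow_succ]
    ring

/-- The key linear recurrence `M_{n+3} = t • M_{n+2} - d • M_n` with `d = ±1`. -/
lemma fibMat_rec (n : ℕ) : ∃ t d : A, (d = 1 ∨ d = -1) ∧
    fibMat a b (n+3) = t • fibMat a b (n+2) - d • fibMat a b n := by
  set Z := fibPhiL (fibWord a b (n+2)) * fibPhiL (fibWord a b (n+1)) with hZ
  have h2 : fibMat a b (n+2) = Z * fibMat a b n := by
    have e1 := fibMat_succ a b (n+1)
    have e0 := fibMat_succ a b n
    rw [show n+1+1 = n+2 from rfl] at e1
    rw [e1, e0, hZ, Matrix.mul_assoc]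
  have h3 : fibMat a b (n+3) = Z * fibMat a b (n+2) := by
    have e2 := fibMat_succ a b (n+2)
    rw [show n+2+1 = n+3 from rfl] at e2
    rw [e2, fibWord_add_three, fibPhiL_append]
  refine ⟨Z 0 0 + Z 1 1, Z 0 0 * Z 1 1 - Z 0 1 * Z 1 0, ?_, ?_⟩
  · have hdet : Z 0 0 * Z 1 1 - Z 0 1 * Z 1 0 = Z.det := (Matrix.det_fin_two Z).symm
    rw [hdet, hZ, Matrix.det_mul, fib_det_phiL, fib_det_phiL, ← pow_add]
    rcases Nat.even_or_odd ((fibWord a b (n+2)).length + (fibWord a b (n+1)).length) with h | h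
    · left; exact h.neg_one_pow
    · right; exact h.neg_one_pow
  · rw [h3, h2, ← Matrix.mul_assoc, fib_sq_fin_two, Matrix.sub_mul, Matrix.smul_mul,
      Matrix.smul_mul, Matrix.one_mul, ← h2]

/-- The base determinant `det(x_1, x_2, x_3) = -(a - b)`. -/
lemma fib_base_det :
    Matrix.det (Matrix.of ![fibTriple a b 1, fibTriple a b 2, fibTriple a b 3]) = -(a - b) := by
  have m1 : fibMat a b 1 = !![a, 1; 1, 0] := by
    show (([a, b, a] : List A).dropLast.dropLast.map _).prod = _
    simp
  have m2 : fibMat a b 2 = !![a*b*a + a + a, a*b + 1; b*a + 1, b] := by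
    show (([a, b, a, a, b] : List A).dropLast.dropLast.map _).prod = _
    simp [Matrix.mul_fin_two]
    ring
  have m3 : fibMat a b 3 =
      !![1 + 2*(a*b) + 4*(a*a) + a*a*b*b + 4*(a*a*a*b) + a*a*a*a*b*b,
         b + 2*a + a*b*b + 3*(a*a*b) + a*a*a*b*b;
         b + 2*a + a*b*b + 3*(a*a*b) + a*a*a*b*b,
         1 + b*b + 2*(a*b) + a*a*b*b] := by
    show (([a, b, a, a, b, a, b, a] : List A).dropLast.dropLast.map _).prod = _
    simp [Matrix.mul_fin_two]
    refine ⟨⟨?_, ?_⟩, ?_, ?_⟩ <;> ring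
  rw [Matrix.det_fin_three]
  simp [fibTriple, m1, m2, m3]
  ring

/-- The main induction: `det(x_{i-1}, x_i, x_{i+1}) = ±(a-b)` for `i ≥ 2`. -/
lemma fib_det_pm (i : ℕ) (hi : 2 ≤ i) :
    Matrix.det (Matrix.of
        ![fibTriple a b (i - 1), fibTriple a b i, fibTriple a b (i + 1)]) = a - b ∨
    Matrix.det (Matrix.of
        ![fibTriple a b (i - 1), fibTriple a b i, fibTriple a b (i + 1)]) = -(a - b) := by
  induction i, hi using Nat.le_induction with
  | base => right; exact fib_base_det a b
  | succ i hi ih =>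
    obtain ⟨t, d, hd, hM⟩ := fibMat_rec a b (i-1)
    rw [show i-1+3 = i+2 by omega, show i-1+2 = i+1 by omega] at hM
    have ht : ∀ k : Fin 3, fibTriple a b (i+2) k
        = t * fibTriple a b (i+1) k - d * fibTriple a b (i-1) k := by
      intro k
      fin_cases k <;>
        simp [fibTriple, hM, Matrix.sub_apply, Matrix.smul_apply, smul_eq_mul]
    have hdet : Matrix.det (Matrix.of
          ![fibTriple a b i, fibTriple a b (i+1), fibTriple a b (i+2)])
        = -d * Matrix.det (Matrix.of
          ![fibTriple a b (i-1), fibTriple a b i, fibTriple a b (i+1)]) := by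
      rw [Matrix.det_fin_three, Matrix.det_fin_three]
      simp only [Matrix.of_apply, Matrix.cons_val', Matrix.cons_val_zero, Matrix.cons_val_one,
        Matrix.head_cons, Matrix.empty_val', Matrix.cons_val_fin_one, Matrix.head_fin_const,
        Matrix.cons_val_two, Matrix.tail_cons]
      rw [ht 0, ht 1, ht 2]
      ring
    rw [show i+1-1 = i from rfl, show i+1+1 = i+2 from rfl, hdet]
    rcases hd with rfl | rfl <;> rcases ih with h | h <;> rw [h]
    · right; ring
    · left; ring
    · left; ring
    · right; ring

end FibAux

/-- **Nonvanishing of the determinants `det(x_{i-1}, x_i, x_{i+1})`.** In the setting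
of the Fibonacci continued fraction construction (`A` a domain with fraction field
`K`, `abv` an absolute value on `K` with `abv a ≥ 1` for nonzero `a ∈ A`, and `a ≠ b`
in `A` with `|a|, |b| ≥ 1 + ρ` for some `ρ > 1`), for every `i ≥ 2` the determinant
`det(x_{i-1}, x_i, x_{i+1})` equals `a - b` or `-(a - b)`; in particular it is
nonzero. -/
theorem fib_det_eq_pm_sub
    {A : Type*} [CommRing A] [IsDomain A]
    {K : Type*} [Field K] [Algebra A K] [IsFractionRing A K]
    (abv : AbsoluteValue K ℝ)
    (habv_A : ∀ x : A, x ≠ 0 → 1 ≤ abv (algebraMap A K x))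
    (ρ : ℝ) (hρ : 1 < ρ)
    (a b : A) (hab : a ≠ b)
    (ha : 1 + ρ ≤ abv (algebraMap A K a)) (hb : 1 + ρ ≤ abv (algebraMap A K b)) :
    ∀ i : ℕ, 2 ≤ i →
      (Matrix.det (Matrix.of
          ![fibTriple a b (i - 1), fibTriple a b i, fibTriple a b (i + 1)]) = a - b ∨
       Matrix.det (Matrix.of
          ![fibTriple a b (i - 1), fibTriple a b i, fibTriple a b (i + 1)]) = -(a - b)) ∧
      Matrix.det (Matrix.of
          ![fibTriple a b (i - 1), fibTriple a b i, fibTriple a b (i + 1)]) ≠ 0 := by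
  intro i hi
  have h := fib_det_pm a b i hi
  refine ⟨h, ?_⟩
  have hab' : a - b ≠ 0 := sub_ne_zero.mpr hab
  rcases h with h | h <;> rw [h]
  · exact hab'
  · exact neg_ne_zero.mpr hab'
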